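/- arXiv:1702.01308 — 2 statements merged into one kernel-verified Lean document; each statement's English description precedes it below -/
import Mathlib

section
/- Let $k$ be a finite field of order $p$ with nontrivial additive character $\psi$, and let $V$ be a finite-dimensional $k$-vector space. For every $L, d$ there is a constant $C_{L,d} > 0$ (independent of $\dim V$) such that: if $P : V^d \to k$ is a multilinear homogeneous polynomial of degree $d \geq 2$ and rank at most $L$, then $\mathbb{E}_{\bar x \in V^d}\, \psi(P(\bar x)) \geq C_{L,d}$. -/
open Finset
open scoped Classical

/-- `Q` depends only on the coordinates in `S` and is linear in each coordinate in `S`. -/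
def MultilinearOn {k V : Type*} [Field k] [AddCommGroup V] [Module k V] {d : ℕ}
    (S : Finset (Fin d)) (Q : (Fin d → V) → k) : Prop :=
  (∀ (x : Fin d → V), ∀ j ∈ S, ∀ v w : V,
      Q (Function.update x j (v + w)) =
        Q (Function.update x j v) + Q (Function.update x j w)) ∧
  (∀ (x : Fin d → V), ∀ j ∈ S, ∀ (c : k) (v : V),
      Q (Function.update x j (c • v)) = c * Q (Function.update x j v)) ∧
  (∀ x y : Fin d → V, (∀ j ∈ S, x j = y j) → Q x = Q y)

section Aux
variable {k V : Type*} [Field k] [Fintype k] [AddCommGroup V] [Module k V] [Fintype V] {d : ℕ}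

lemma splitAt_ne (j : Fin d) (v : V) (y : {a : Fin d // a ≠ j} → V) {a : Fin d} (h : a ≠ j) :
    (Equiv.funSplitAt j V).symm (v, y) a = y ⟨a, h⟩ := by
  simp [Equiv.funSplitAt, Equiv.piSplitAt, h]

lemma splitAt_eq (j : Fin d) (v : V) (y : {a : Fin d // a ≠ j} → V) :
    (Equiv.funSplitAt j V).symm (v, y) j = v := by
  simp [Equiv.funSplitAt, Equiv.piSplitAt]

lemma splitAt_update (j : Fin d) (v w : V) (y : {a : Fin d // a ≠ j} → V) :
    (Equiv.funSplitAt j V).symm (v, y)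
      = Function.update ((Equiv.funSplitAt j V).symm (w, y)) j v := by
  funext a
  rcases eq_or_ne a j with rfl | h
  · rw [splitAt_eq, Function.update_self]
  · rw [splitAt_ne j v y h, Function.update_of_ne h, splitAt_ne j w y h]

lemma sum_split {M : Type*} [AddCommMonoid M] (j : Fin d) (F : (Fin d → V) → M) :
    ∑ x : Fin d → V, F x
      = ∑ y : {a : Fin d // a ≠ j} → V, ∑ v : V, F ((Equiv.funSplitAt j V).symm (v, y)) := by
  rw [← Equiv.sum_comp (Equiv.funSplitAt j V).symm F, Fintype.sum_prod_type]
  exact Finset.sum_comm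

lemma char_sum (ψ : AddChar k ℂ) (hψ : ψ ≠ 1) (ℓ : V →ₗ[k] k) :
    ∑ v : V, ψ (ℓ v) = if ℓ = 0 then (Fintype.card V : ℂ) else 0 := by
  split_ifs with h
  · simp [h, Finset.card_univ]
  · have hex : ∃ v, ℓ v ≠ 0 := by
      by_contra hc
      push_neg at hc
      exact h (LinearMap.ext fun v => by simp [hc v])
    obtain ⟨v, hv⟩ := hex
    obtain ⟨a, ha⟩ := AddChar.ne_one_iff.mp hψ
    set χ : AddChar V ℂ := ψ.compAddMonoidHom ℓ.toAddMonoidHom with hχdef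
    have hχ : χ ≠ 0 := by
      rw [AddChar.ne_zero_iff]
      refine ⟨(a / ℓ v) • v, ?_⟩
      simp only [hχdef, AddChar.compAddMonoidHom_apply, LinearMap.toAddMonoidHom_coe,
        map_smul, smul_eq_mul, div_mul_cancel₀ _ hv]
      exact ha
    have := AddChar.sum_eq_zero_iff_ne_zero.mpr hχ
    simpa [hχdef] using this

lemma card_ker_bound {ι : Type*} [Fintype ι] (ℓ : ι → V →ₗ[k] k) :
    (Fintype.card V : ℝ) ≤ (Fintype.card k : ℝ) ^ (Fintype.card ι) *
      ∑ v : V, (if ∀ i, ℓ i v = 0 then (1:ℝ) else 0) := by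
  set Φ : V →ₗ[k] (ι → k) := LinearMap.pi ℓ with hΦ
  have hker : ∀ v : V, (∀ i, ℓ i v = 0) ↔ v ∈ LinearMap.ker Φ := by
    intro v; simp [hΦ, LinearMap.mem_ker, funext_iff]
  have hsum : ∑ v : V, (if ∀ i, ℓ i v = 0 then (1:ℝ) else 0)
      = ((univ.filter (fun v : V => v ∈ LinearMap.ker Φ)).card : ℝ) := by
    rw [Finset.sum_boole]
    congr 2
    exact Finset.filter_congr fun v _ => by simp [hker v]
  have hcard1 : (univ.filter (fun v : V => v ∈ LinearMap.ker Φ)).card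
      = Nat.card (LinearMap.ker Φ) := by
    rw [Nat.card_eq_fintype_card, Fintype.card_subtype]
  have hquot := Submodule.card_eq_card_quotient_mul_card (LinearMap.ker Φ)
  have hq : Nat.card (V ⧸ LinearMap.ker Φ) ≤ Fintype.card k ^ Fintype.card ι := by
    have h1 : Nat.card (V ⧸ LinearMap.ker Φ) = Nat.card (LinearMap.range Φ) :=
      Nat.card_congr (LinearMap.quotKerEquivRange Φ).toEquiv
    have h2 : Nat.card (LinearMap.range Φ) ≤ Nat.card (ι → k) :=
      Nat.card_le_card_of_injective _ Subtype.val_injective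
    rw [h1]
    simpa [Nat.card_eq_fintype_card] using h2
  have hnat : Nat.card V ≤ Fintype.card k ^ Fintype.card ι * Nat.card (LinearMap.ker Φ) := by
    rw [hquot, mul_comm]
    exact Nat.mul_le_mul_right _ hq
  rw [hsum, hcard1]
  have := Nat.card_eq_fintype_card (α := V)
  exact_mod_cast this ▸ hnat

lemma lemmaA {L : ℕ} (T : Fin L → (Fin d → V) → k) (S : Fin L → Finset (Fin d)) :
    ∀ (n : ℕ) (U : Finset (Fin d)) (A : Finset (Fin L)), U.card ≤ n →
    (∀ i ∈ A, (S i).Nonempty ∧ S i ⊆ U ∧ MultilinearOn (S i) (T i)) →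
    (Fintype.card V : ℝ) ^ d ≤ (Fintype.card k : ℝ) ^ (U.card * A.card) *
      ∑ x : Fin d → V, ∏ i ∈ A, (if T i x = 0 then (1:ℝ) else 0) := by
  intro n
  induction n with
  | zero =>
    intro U A hU h
    rcases A.eq_empty_or_nonempty with rfl | ⟨i₀, hi₀⟩
    · simp [Fintype.card_fun]
    · obtain ⟨hne, hsub, _⟩ := h i₀ hi₀
      obtain ⟨j, hj⟩ := hne
      have hjU : j ∈ U := hsub hj
      have : 0 < U.card := Finset.card_pos.mpr ⟨j, hjU⟩
      omega
  | succ n ih =>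
    intro U A hU h
    rcases A.eq_empty_or_nonempty with rfl | ⟨i₀, hi₀⟩
    · simp [Fintype.card_fun]
    · obtain ⟨hne, hsub, _⟩ := h i₀ hi₀
      obtain ⟨j, hj⟩ := hne
      have hjU : j ∈ U := hsub hj
      have hUpos : 0 < U.card := Finset.card_pos.mpr ⟨j, hjU⟩
      set e := (Equiv.funSplitAt j V).symm with he
      set A₁ := A.filter (fun i => j ∈ S i) with hA₁
      set A₂ := A.filter (fun i => ¬ j ∈ S i) with hA₂
      have hcards : A₁.card + A₂.card = A.card :=
        Finset.card_filter_add_card_filter_not _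
      have hindep : ∀ i ∈ A₂, ∀ (v : V) (y : {a : Fin d // a ≠ j} → V),
          T i (e (v, y)) = T i (e (0, y)) := by
        intro i hi v y
        rw [hA₂, Finset.mem_filter] at hi
        obtain ⟨hiA, hjS⟩ := hi
        obtain ⟨_, _, hM⟩ := h i hiA
        refine hM.2.2 _ _ fun a ha => ?_
        have haj : a ≠ j := fun hh => hjS (hh ▸ ha)
        rw [he, splitAt_ne j v y haj, splitAt_ne j 0 y haj]
      have hinner : ∀ y : {a : Fin d // a ≠ j} → V,
          (Fintype.card V : ℝ) ≤ (Fintype.card k : ℝ) ^ A₁.card *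
            ∑ v : V, ∏ i ∈ A₁, (if T i (e (v, y)) = 0 then (1:ℝ) else 0) := by
        intro y
        have hlin : ∀ i : {i // i ∈ A₁}, IsLinearMap k (fun v : V => T i.1 (e (v, y))) := by
          rintro ⟨i, hi⟩
          rw [hA₁, Finset.mem_filter] at hi
          obtain ⟨hiA, hjS⟩ := hi
          obtain ⟨hM1, hM2, _⟩ := (h i hiA).2.2
          constructor
          · intro v w
            have h1 := hM1 (e ((0:V), y)) j hjS v w
            rw [he] at h1 ⊢
            rw [splitAt_update j (v+w) 0 y, splitAt_update j v 0 y, splitAt_update j w 0 y]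
            exact h1
          · intro c v
            have h1 := hM2 (e ((0:V), y)) j hjS c v
            rw [he] at h1 ⊢
            rw [splitAt_update j (c • v) 0 y, splitAt_update j v 0 y]
            exact h1
        set ℓ : {i // i ∈ A₁} → V →ₗ[k] k := fun i => (hlin i).mk' _ with hℓ
        have hb := card_ker_bound ℓ
        rw [Fintype.card_coe] at hb
        calc (Fintype.card V : ℝ)
            ≤ (Fintype.card k : ℝ) ^ A₁.card *
              ∑ v : V, (if ∀ i : {i // i ∈ A₁}, ℓ i v = 0 then (1:ℝ) else 0) := hb
          _ = (Fintype.card k : ℝ) ^ A₁.card *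
              ∑ v : V, ∏ i ∈ A₁, (if T i (e (v, y)) = 0 then (1:ℝ) else 0) := by
              congr 1
              refine Finset.sum_congr rfl fun v _ => ?_
              rw [Finset.prod_boole]
              have hval : ∀ i : {i // i ∈ A₁}, ℓ i v = T i.1 (e (v, y)) := fun i => rfl
              congr 1
              simp only [eq_iff_iff]
              constructor
              · intro hall i hi
                have := hall ⟨i, hi⟩
                rwa [hval] at this
              · intro hall i
                rw [hval]
                exact hall i.1 i.2
      have hsplit : ∑ x : Fin d → V, ∏ i ∈ A, (if T i x = 0 then (1:ℝ) else 0)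
          = ∑ y : {a : Fin d // a ≠ j} → V,
              (∏ i ∈ A₂, (if T i (e (0, y)) = 0 then (1:ℝ) else 0)) *
              ∑ v : V, ∏ i ∈ A₁, (if T i (e (v, y)) = 0 then (1:ℝ) else 0) := by
        rw [sum_split j]
        refine Finset.sum_congr rfl fun y _ => ?_
        rw [Finset.mul_sum]
        refine Finset.sum_congr rfl fun v _ => ?_
        rw [← Finset.prod_filter_mul_prod_filter_not A (fun i => j ∈ S i), mul_comm]
        rw [← hA₁, ← hA₂]
        congr 1
        exact Finset.prod_congr rfl fun i hi => by rw [hindep i hi v y]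
      set B := ∑ y : {a : Fin d // a ≠ j} → V,
          ∏ i ∈ A₂, (if T i (e (0, y)) = 0 then (1:ℝ) else 0) with hB
      have hstep1 : (Fintype.card V : ℝ) * B ≤ (Fintype.card k : ℝ) ^ A₁.card *
          ∑ x : Fin d → V, ∏ i ∈ A, (if T i x = 0 then (1:ℝ) else 0) := by
        rw [hsplit, hB, Finset.mul_sum, Finset.mul_sum]
        refine Finset.sum_le_sum fun y _ => ?_
        have hy := hinner y
        have hpn : (0:ℝ) ≤ ∏ i ∈ A₂, (if T i (e (0, y)) = 0 then (1:ℝ) else 0) :=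
          Finset.prod_nonneg fun i _ => by positivity
        calc (Fintype.card V : ℝ) * ∏ i ∈ A₂, (if T i (e (0, y)) = 0 then (1:ℝ) else 0)
            ≤ ((Fintype.card k : ℝ) ^ A₁.card *
                ∑ v : V, ∏ i ∈ A₁, (if T i (e (v, y)) = 0 then (1:ℝ) else 0)) *
                ∏ i ∈ A₂, (if T i (e (0, y)) = 0 then (1:ℝ) else 0) :=
              mul_le_mul_of_nonneg_right hy hpn
          _ = (Fintype.card k : ℝ) ^ A₁.card *
              ((∏ i ∈ A₂, (if T i (e (0, y)) = 0 then (1:ℝ) else 0)) *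
               ∑ v : V, ∏ i ∈ A₁, (if T i (e (v, y)) = 0 then (1:ℝ) else 0)) := by ring
      have hS₂ : ∑ x : Fin d → V, ∏ i ∈ A₂, (if T i x = 0 then (1:ℝ) else 0)
          = (Fintype.card V : ℝ) * B := by
        rw [sum_split j, hB, Finset.mul_sum]
        refine Finset.sum_congr rfl fun y _ => ?_
        have hc : ∀ v : V, ∏ i ∈ A₂, (if T i (e (v, y)) = 0 then (1:ℝ) else 0)
            = ∏ i ∈ A₂, (if T i (e (0, y)) = 0 then (1:ℝ) else 0) := fun v =>
          Finset.prod_congr rfl fun i hi => by rw [hindep i hi v y]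
        rw [Finset.sum_congr rfl fun v _ => hc v, Finset.sum_const, Finset.card_univ,
          nsmul_eq_mul]
      have hih := ih (U.erase j) A₂ (by
          rw [Finset.card_erase_of_mem hjU]; omega) (by
          intro i hi
          rw [hA₂, Finset.mem_filter] at hi
          obtain ⟨hiA, hjS⟩ := hi
          obtain ⟨h1, h2, h3⟩ := h i hiA
          refine ⟨h1, ?_, h3⟩
          intro a ha
          exact Finset.mem_erase.mpr ⟨fun hh => hjS (hh ▸ ha), h2 ha⟩)
      rw [Finset.card_erase_of_mem hjU, hS₂] at hih
      have hq1 : (1:ℝ) ≤ (Fintype.card k : ℝ) := by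
        have h1 : 1 ≤ Fintype.card k := Fintype.card_pos
        exact_mod_cast h1
      have hS₀nonneg : (0:ℝ) ≤ ∑ x : Fin d → V, ∏ i ∈ A, (if T i x = 0 then (1:ℝ) else 0) :=
        Finset.sum_nonneg fun x _ => Finset.prod_nonneg fun i _ => by positivity
      obtain ⟨m, hm⟩ : ∃ m, U.card = m + 1 := ⟨U.card - 1, by omega⟩
      have hexp : m * A₂.card + A₁.card ≤ U.card * A.card := by
        rw [hm, ← hcards]
        nlinarith
      calc (Fintype.card V : ℝ) ^ d
          ≤ (Fintype.card k : ℝ) ^ ((U.card - 1) * A₂.card) * ((Fintype.card V : ℝ) * B) := hih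
        _ = (Fintype.card k : ℝ) ^ (m * A₂.card) * ((Fintype.card V : ℝ) * B) := by
            rw [hm]; norm_num
        _ ≤ (Fintype.card k : ℝ) ^ (m * A₂.card) *
            ((Fintype.card k : ℝ) ^ A₁.card *
              ∑ x : Fin d → V, ∏ i ∈ A, (if T i x = 0 then (1:ℝ) else 0)) :=
            mul_le_mul_of_nonneg_left hstep1 (by positivity)
        _ = (Fintype.card k : ℝ) ^ (m * A₂.card + A₁.card) *
              ∑ x : Fin d → V, ∏ i ∈ A, (if T i x = 0 then (1:ℝ) else 0) := by
            rw [pow_add]; ring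
        _ ≤ (Fintype.card k : ℝ) ^ (U.card * A.card) *
              ∑ x : Fin d → V, ∏ i ∈ A, (if T i x = 0 then (1:ℝ) else 0) :=
            mul_le_mul_of_nonneg_right (pow_le_pow_right₀ hq1 hexp) hS₀nonneg

end Aux

/-- For every `L, d` there is `C_{L,d} > 0`, independent of `dim V`, such that the
exponential sum of any multilinear homogeneous polynomial of degree `d ≥ 2` and rank
at most `L` is at least `C_{L,d}`. -/
theorem stmt2 {k : Type*} [Field k] [Fintype k] (ψ : AddChar k ℂ) (hψ : ψ ≠ 1)
    (L d : ℕ) (hd : 2 ≤ d) :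
    ∃ C : ℝ, 0 < C ∧
      ∀ (V : Type) [AddCommGroup V] [Module k V] [Fintype V],
      ∀ P : MultilinearMap k (fun _ : Fin d => V) k,
      (∃ (S : Fin L → Finset (Fin d)) (Q R : Fin L → (Fin d → V) → k),
        (∀ i, (S i).Nonempty ∧ ((S i)ᶜ).Nonempty ∧
          MultilinearOn (S i) (Q i) ∧ MultilinearOn ((S i)ᶜ) (R i)) ∧
        ∀ x : Fin d → V, P x = ∑ i : Fin L, Q i x * R i x) →
      C ≤ (((Fintype.card V : ℝ))⁻¹ ^ d *
        (∑ x : Fin d → V, ψ (P x)).re) := by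
  have hq1 : (1:ℝ) ≤ (Fintype.card k : ℝ) := by
    have h1 : 1 ≤ Fintype.card k := Fintype.card_pos
    exact_mod_cast h1
  have hqpos : (0:ℝ) < (Fintype.card k : ℝ) := lt_of_lt_of_le one_pos hq1
  refine ⟨((Fintype.card k : ℝ) ^ (d * L))⁻¹, by positivity, ?_⟩
  intro V _ _ _ P hPrank
  obtain ⟨S, Q, R, hSR, hP⟩ := hPrank
  have hd1 : 0 < d := by omega
  have hNpos : (0:ℝ) < (Fintype.card V : ℝ) := by
    have : 0 < Fintype.card V := Fintype.card_pos_iff.mpr ⟨0⟩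
    exact_mod_cast this
  set j : Fin d := ⟨0, hd1⟩ with hjdef
  set G : Fin L → (Fin d → V) → k := fun i => if j ∈ S i then R i else Q i with hG
  set S' : Fin L → Finset (Fin d) := fun i => if j ∈ S i then (S i)ᶜ else S i with hS'
  have hG' : ∀ i, (S' i).Nonempty ∧ S' i ⊆ ({j}ᶜ : Finset (Fin d)) ∧
      MultilinearOn (S' i) (G i) := by
    intro i
    obtain ⟨h1, h2, h3, h4⟩ := hSR i
    by_cases hc : j ∈ S i
    · refine ⟨by simpa [hS', hc] using h2, ?_, by simpa [hS', hG, hc] using h4⟩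
      intro a ha
      simp only [hS', if_pos hc, Finset.mem_compl] at ha
      simp only [Finset.mem_compl, Finset.mem_singleton]
      rintro rfl
      exact ha hc
    · refine ⟨by simpa [hS', hc] using h1, ?_, by simpa [hS', hG, hc] using h3⟩
      intro a ha
      simp only [hS', if_neg hc] at ha
      simp only [Finset.mem_compl, Finset.mem_singleton]
      rintro rfl
      exact hc ha
  have hjS' : ∀ i, j ∉ S' i := by
    intro i hmem
    have := (hG' i).2.1 hmem
    simp [Finset.mem_compl] at this
  have hGindep : ∀ i (x : Fin d → V) (v : V), G i (Function.update x j v) = G i x := by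
    intro i x v
    refine ((hG' i).2.2).2.2 _ _ fun a ha => ?_
    have haj : a ≠ j := fun hh => hjS' i (hh ▸ ha)
    rw [Function.update_of_ne haj]
  have hzero : ∀ (x : Fin d → V), (∀ i, G i x = 0) → ∀ v, P (Function.update x j v) = 0 := by
    intro x hall v
    have hallup : ∀ i, G i (Function.update x j v) = 0 := fun i => by
      rw [hGindep i x v]; exact hall i
    rw [hP]
    refine Finset.sum_eq_zero fun i _ => ?_
    by_cases hc : j ∈ S i
    · have : R i (Function.update x j v) = 0 := by
        have h0 := hallup i
        simpa [hG, hc] using h0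
      rw [this, mul_zero]
    · have : Q i (Function.update x j v) = 0 := by
        have h0 := hallup i
        simpa [hG, hc] using h0
      rw [this, zero_mul]
  set e := (Equiv.funSplitAt j V).symm with he
  set ℓ : ({a : Fin d // a ≠ j} → V) → (V →ₗ[k] k) :=
    fun y => P.toLinearMap (e (0, y)) j with hℓ
  have hPe : ∀ (v : V) (y : {a : Fin d // a ≠ j} → V), P (e (v, y)) = ℓ y v := by
    intro v y
    rw [he, splitAt_update j v 0 y]
    simp [hℓ]
    rfl
  have hc1 : ∑ x : Fin d → V, ψ (P x)
      = ((∑ y : {a : Fin d // a ≠ j} → V,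
          if ℓ y = 0 then (Fintype.card V : ℝ) else 0 : ℝ) : ℂ) := by
    calc ∑ x : Fin d → V, ψ (P x)
        = ∑ y : {a : Fin d // a ≠ j} → V, ∑ v : V, ψ (P (e (v, y))) :=
          sum_split j (fun x => ψ (P x))
      _ = ∑ y : {a : Fin d // a ≠ j} → V,
            (if ℓ y = 0 then (Fintype.card V : ℂ) else 0) := by
          refine Finset.sum_congr rfl fun y _ => ?_
          rw [show (∑ v : V, ψ (P (e (v, y)))) = ∑ v : V, ψ (ℓ y v) from
            Finset.sum_congr rfl fun v _ => by rw [hPe v y]]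
          exact char_sum ψ hψ (ℓ y)
      _ = ((∑ y : {a : Fin d // a ≠ j} → V,
          if ℓ y = 0 then (Fintype.card V : ℝ) else 0 : ℝ) : ℂ) := by
          push_cast
          refine Finset.sum_congr rfl fun y _ => ?_
          split_ifs <;> simp
  have hre : (∑ x : Fin d → V, ψ (P x)).re
      = ∑ y : {a : Fin d // a ≠ j} → V,
          if ℓ y = 0 then (Fintype.card V : ℝ) else 0 := by
    rw [hc1, Complex.ofReal_re]
  set B := ∑ y : {a : Fin d // a ≠ j} → V,
      ∏ i : Fin L, (if G i (e (0, y)) = 0 then (1:ℝ) else 0) with hB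
  have hBnn : 0 ≤ B := Finset.sum_nonneg fun y _ =>
    Finset.prod_nonneg fun i _ => by positivity
  have hge1 : (Fintype.card V : ℝ) * B ≤ ∑ y : {a : Fin d // a ≠ j} → V,
      (if ℓ y = 0 then (Fintype.card V : ℝ) else 0) := by
    rw [hB, Finset.mul_sum]
    refine Finset.sum_le_sum fun y _ => ?_
    by_cases hall : ∀ i, G i (e (0, y)) = 0
    · have hprod : ∏ i : Fin L, (if G i (e (0, y)) = 0 then (1:ℝ) else 0) = 1 :=
        Finset.prod_eq_one fun i _ => if_pos (hall i)
      have hl0 : ℓ y = 0 := by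
        apply LinearMap.ext
        intro v
        have := hzero (e (0, y)) hall v
        simp only [hℓ, MultilinearMap.toLinearMap_apply, LinearMap.zero_apply]
        exact this
      rw [hprod, if_pos hl0, mul_one]
    · push_neg at hall
      obtain ⟨i₀, hi₀⟩ := hall
      have hprod : ∏ i : Fin L, (if G i (e (0, y)) = 0 then (1:ℝ) else 0) = 0 :=
        Finset.prod_eq_zero (Finset.mem_univ i₀) (if_neg hi₀)
      rw [hprod, mul_zero]
      split_ifs
      · exact le_of_lt hNpos
      · exact le_refl 0
  have hS₂ : ∑ x : Fin d → V, ∏ i : Fin L, (if G i x = 0 then (1:ℝ) else 0)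
      = (Fintype.card V : ℝ) * B := by
    rw [sum_split j, hB, Finset.mul_sum]
    refine Finset.sum_congr rfl fun y _ => ?_
    have hc : ∀ v : V, ∏ i : Fin L, (if G i (e (v, y)) = 0 then (1:ℝ) else 0)
        = ∏ i : Fin L, (if G i (e (0, y)) = 0 then (1:ℝ) else 0) := by
      intro v
      refine Finset.prod_congr rfl fun i _ => ?_
      rw [show e (v, y) = Function.update (e (0, y)) j v from splitAt_update j v 0 y,
        hGindep]
    rw [Finset.sum_congr rfl fun v _ => hc v, Finset.sum_const, Finset.card_univ,
      nsmul_eq_mul]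
  have hA := lemmaA G S' d ({j}ᶜ : Finset (Fin d)) (univ : Finset (Fin L))
    (by
      have : ({j}ᶜ : Finset (Fin d)).card ≤ Fintype.card (Fin d) :=
        Finset.card_le_univ _
      simpa using this)
    (by
      intro i _
      exact ⟨(hG' i).1, (hG' i).2.1, (hG' i).2.2⟩)
  have hUcard : ({j}ᶜ : Finset (Fin d)).card = d - 1 := by
    rw [Finset.card_compl, Finset.card_singleton, Fintype.card_fin]
  rw [hUcard, Finset.card_univ, Fintype.card_fin] at hA
  have hprodA : ∀ x : Fin d → V, ∏ i ∈ (univ : Finset (Fin L)),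
      (if G i x = 0 then (1:ℝ) else 0) = ∏ i : Fin L, (if G i x = 0 then (1:ℝ) else 0) :=
    fun x => rfl
  rw [Finset.sum_congr rfl fun x _ => hprodA x, hS₂] at hA
  have hmono : ((Fintype.card k : ℝ)) ^ ((d - 1) * L) ≤ (Fintype.card k : ℝ) ^ (d * L) :=
    pow_le_pow_right₀ hq1 (Nat.mul_le_mul_right L (Nat.sub_le d 1))
  have hkey : (Fintype.card V : ℝ) ^ d
      ≤ (Fintype.card k : ℝ) ^ (d * L) * (∑ x : Fin d → V, ψ (P x)).re := by
    calc (Fintype.card V : ℝ) ^ d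
        ≤ (Fintype.card k : ℝ) ^ ((d - 1) * L) * ((Fintype.card V : ℝ) * B) := hA
      _ ≤ (Fintype.card k : ℝ) ^ (d * L) * ((Fintype.card V : ℝ) * B) :=
          mul_le_mul_of_nonneg_right hmono (by positivity)
      _ ≤ (Fintype.card k : ℝ) ^ (d * L) * (∑ x : Fin d → V, ψ (P x)).re := by
          refine mul_le_mul_of_nonneg_left ?_ (by positivity)
          rw [hre]
          exact hge1
  have hNd : (0:ℝ) < (Fintype.card V : ℝ) ^ d := by positivity
  have hqd : (0:ℝ) < (Fintype.card k : ℝ) ^ (d * L) := by positivity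
  rw [inv_pow, ← div_eq_inv_mul, le_div_iff₀ hNd, inv_mul_eq_div, div_le_iff₀ hqd]
  calc (Fintype.card V : ℝ) ^ d
      ≤ (Fintype.card k : ℝ) ^ (d * L) * (∑ x : Fin d → V, ψ (P x)).re := hkey
    _ = (∑ x : Fin d → V, ψ (P x)).re * (Fintype.card k : ℝ) ^ (d * L) := by ring
end

section
/- Let $\Gamma = \bigcup_n \Gamma_n$ be an abelian group written as an increasing union of finitely generated subgroups, $k$ a finite field, and $V, W$ countable-dimensional $k$-vector spaces. Suppose there exists $C = C(c)$ such that for any map $a^f : \Gamma \to \mathrm{Hom}^f(V, W)$ (finite-rank linear maps) with $r(a^f(\gamma' + \gamma'') - a^f(\gamma') - a^f(\gamma'')) \leq c$ for all $\gamma', \gamma''$, there is a homomorphism $\chi^f : \Gamma \to \mathrm{Hom}^f(V, W)$ with $r(a^f(\gamma) - \chi^f(\gamma)) \leq C$ for all $\gamma$. Then for any map $a : \Gamma \to \mathrm{Hom}(V, W)$ with $r(a(\gamma' + \gamma'') - a(\gamma') - a(\gamma'')) \leq c$ for all $\gamma', \gamma''$, there exists a homomorphism $\chi : \Gamma \to \mathrm{Hom}(V,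 W)$ with $r(a(\gamma) - \chi(\gamma)) \leq C$ for all $\gamma$. -/
open Cardinal CategoryTheory

namespace Stmt6Aux

variable {k : Type*} [Field k]

noncomputable def eK (k : Type*) [Field k] (n : ℕ) : (ℕ →₀ k) →ₗ[k] (Fin n → k) :=
  LinearMap.pi (fun i => Finsupp.lapply (i : ℕ))

noncomputable def mK (k : Type*) [Field k] (n : ℕ) : (Fin n → k) →ₗ[k] (ℕ →₀ k) :=
  ∑ i : Fin n, (Finsupp.lsingle (i : ℕ)).comp (LinearMap.proj i)

lemma eK_apply (n : ℕ) (w : ℕ →₀ k) (i : Fin n) : eK k n w i = w i := rfl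

lemma mK_apply (n : ℕ) (x : Fin n → k) (j : ℕ) :
    mK k n x j = if h : j < n then x ⟨j, h⟩ else 0 := by
  simp only [mK, LinearMap.coe_sum, Finset.sum_apply, LinearMap.comp_apply,
    LinearMap.proj_apply, Finsupp.lsingle_apply, Finsupp.coe_finset_sum, Finset.sum_apply,
    Finsupp.single_apply]
  split_ifs with h
  · rw [Finset.sum_eq_single (⟨j, h⟩ : Fin n)]
    · simp
    · intro b _ hb
      rw [if_neg]
      rintro rfl
      exact hb rfl
    · simp
  · apply Finset.sum_eq_zero
    intro b _
    rw [if_neg]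
    rintro rfl
    exact h b.isLt

lemma mK_coord (n : ℕ) (x : Fin n → k) (j : ℕ) (h : j < n) : mK k n x j = x ⟨j, h⟩ := by
  rw [mK_apply, dif_pos h]

lemma mK_apply_ge (n : ℕ) (x : Fin n → k) (j : ℕ) (h : n ≤ j) : mK k n x j = 0 := by
  rw [mK_apply, dif_neg (by omega)]

lemma eK_mK (n : ℕ) (x : Fin n → k) : eK k n (mK k n x) = x := by
  funext i
  rw [eK_apply, mK_coord n x i i.isLt]

lemma mK_eK (n : ℕ) (w : ℕ →₀ k) (h : ∀ j, n ≤ j → w j = 0) : mK k n (eK k n w) = w := by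
  ext j
  rw [mK_apply]
  split_ifs with hj
  · rfl
  · exact (h j (not_lt.1 hj)).symm

lemma mK_eK_coord (n : ℕ) (w : ℕ →₀ k) (j : ℕ) (h : j < n) :
    mK k n (eK k n w) j = w j := by
  rw [mK_coord n _ j h]; rfl

lemma eK_trunc {n m : ℕ} (h : n ≤ m) (w : ℕ →₀ k) :
    eK k n (mK k m (eK k m w)) = eK k n w := by
  funext i
  rw [eK_apply, eK_apply, mK_eK_coord m w i (lt_of_lt_of_le i.isLt h)]

lemma mK_trunc {n m : ℕ} (h : n ≤ m) (x : Fin n → k) :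
    mK k m (eK k m (mK k n x)) = mK k n x :=
  mK_eK m _ (fun j hj => mK_apply_ge n x j (le_trans h hj))

universe v
lemma rank_conj_le {V₁ V₂ W₁ W₂ : Type v} [AddCommGroup V₁] [AddCommGroup V₂]
    [AddCommGroup W₁] [AddCommGroup W₂] [Module k V₁] [Module k V₂] [Module k W₁] [Module k W₂]
    (E : W₁ →ₗ[k] W₂) (M : V₂ →ₗ[k] V₁) (f : V₁ →ₗ[k] W₁) :
    LinearMap.rank (E ∘ₗ f ∘ₗ M) ≤ LinearMap.rank f :=
  le_trans (LinearMap.rank_comp_le_right _ _) (LinearMap.rank_comp_le_left _ _)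

lemma finite_hom {G M : Type*} [AddGroup G] [AddMonoid M] [Finite M]
    (h : AddGroup.FG G) : Finite (G →+ M) := by
  obtain ⟨S, hS, hfin⟩ := AddGroup.fg_iff.1 h
  have : Finite S := hfin
  have hinj : Function.Injective (fun f : G →+ M => (fun s : S => f s)) := by
    intro f g hfg
    exact AddMonoidHom.eq_of_eqOn_dense hS (fun x hx => congrFun hfg ⟨x, hx⟩)
  exact Finite.of_injective _ hinj

lemma konig {S : ℕ → Type*} [∀ n, Finite (S n)] [∀ n, Nonempty (S n)] (t : ∀ n, S (n + 1) → S n) :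
    ∃ u : ∀ n, S n, ∀ n, t n (u (n + 1)) = u n := by
  let F : ℕᵒᵖ ⥤ Type _ := Functor.ofOpSequence (fun n => (TypeCat.ofHom (t n) : S (n+1) ⟶ S n))
  have h2 : ∀ j : ℕᵒᵖ, Finite (F.obj j) := fun j => (by show Finite (S j.unop); infer_instance)
  have h3 : ∀ j : ℕᵒᵖ, Nonempty (F.obj j) := fun j => (by show Nonempty (S j.unop); infer_instance)
  obtain ⟨u, hu⟩ := nonempty_sections_of_finite_inverse_system F
  refine ⟨fun n => u (Opposite.op n), fun n => ?_⟩
  have := hu ((homOfLE (Nat.le_add_right n 1)).op : Opposite.op (n+1) ⟶ Opposite.op n)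
  rwa [Functor.ofOpSequence_map_homOfLE_succ] at this

lemma support_bound (v : ℕ →₀ k) (j : ℕ) (h : v.support.sup id + 1 ≤ j) : v j = 0 := by
  by_contra hv
  have : j ∈ v.support := Finsupp.mem_support_iff.2 hv
  have := Finset.le_sup (f := id) this
  simp only [id] at this
  omega

end Stmt6Aux


set_option maxHeartbeats 1000000 in
/-- Reduction from maps into all of `Hom(V,W)` to maps into finite-rank homomorphisms:
if every approximately additive map `Γ → Hom^f(V,W)` (defect rank ≤ c) is within rank
`C` of a homomorphism into `Hom^f(V,W)`, then every approximately additive map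
`Γ → Hom(V,W)` is within rank `C` of a homomorphism. Here `Γ = ⋃ Γₙ` is an increasing
union of finitely generated subgroups and `V = W = ℕ →₀ k` is countable-dimensional. -/
theorem stmt6 {k : Type*} [Field k] [Fintype k]
    {Γ : Type*} [AddCommGroup Γ] (Γn : ℕ → AddSubgroup Γ)
    (hmono : Monotone Γn) (hfg : ∀ n, (Γn n).FG) (hunion : ∀ γ : Γ, ∃ n, γ ∈ Γn n)
    (c C : ℕ)
    (hyp : ∀ a : Γ → (ℕ →₀ k) →ₗ[k] (ℕ →₀ k),
      (∀ γ, LinearMap.rank (a γ) < ℵ₀) →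
      (∀ γ γ', LinearMap.rank (a (γ + γ') - a γ - a γ') ≤ (c : Cardinal)) →
      ∃ χ : Γ →+ ((ℕ →₀ k) →ₗ[k] (ℕ →₀ k)),
        (∀ γ, LinearMap.rank (χ γ) < ℵ₀) ∧
        ∀ γ, LinearMap.rank (a γ - χ γ) ≤ (C : Cardinal))
    (a : Γ → (ℕ →₀ k) →ₗ[k] (ℕ →₀ k))
    (ha : ∀ γ γ', LinearMap.rank (a (γ + γ') - a γ - a γ') ≤ (c : Cardinal)) :
    ∃ χ : Γ →+ ((ℕ →₀ k) →ₗ[k] (ℕ →₀ k)),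
      ∀ γ, LinearMap.rank (a γ - χ γ) ≤ (C : Cardinal) := by
  classical
  open Stmt6Aux in
  choose n₀ hn₀ using hunion
  obtain ⟨T, hT⟩ := (Finsupp.lcoeFun (α := ℕ) (M := k) (R := k)).exists_leftInverse_of_injective
    (LinearMap.ker_eq_bot.2 (fun x y hxy => DFunLike.coe_injective hxy))
  have hTι : ∀ w : ℕ →₀ k, T (Finsupp.lcoeFun (R := k) w) = w := fun w => by
    have := LinearMap.congr_fun hT w
    simpa using this
  -- the finite approximation sets
  let S : ℕ → Type _ := fun n =>
    {φ : (Γn n) →+ ((Fin n → k) →ₗ[k] (Fin n → k)) //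
      ∀ g : (Γn n), LinearMap.rank ((eK k n) ∘ₗ (a ↑g) ∘ₗ (mK k n) - φ g) ≤ (C : Cardinal)}
  haveI hSfin : ∀ n, Finite (S n) := by
    intro n
    haveI : Finite ((Fin n → k) →ₗ[k] (Fin n → k)) :=
      Finite.of_injective _ (DFunLike.coe_injective (F := (Fin n → k) →ₗ[k] (Fin n → k)))
    haveI : AddGroup.FG (Γn n) := (AddGroup.fg_iff_addSubgroup_fg _).2 (hfg n)
    haveI : Finite ((Γn n) →+ ((Fin n → k) →ₗ[k] (Fin n → k))) := finite_hom ‹_›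
    exact Subtype.finite
  haveI hSne : ∀ n, Nonempty (S n) := by
    intro n
    set b : Γ → (ℕ →₀ k) →ₗ[k] (ℕ →₀ k) := fun γ => (mK k n) ∘ₗ ((eK k n) ∘ₗ (a γ)) with hb
    have h1 : ∀ γ, LinearMap.rank (b γ) < ℵ₀ :=
      fun γ => lt_of_le_of_lt (le_trans (LinearMap.rank_comp_le_left _ _)
        (LinearMap.rank_le_domain _)) (Module.rank_lt_aleph0 k (Fin n → k))
    have h2 : ∀ γ γ', LinearMap.rank (b (γ + γ') - b γ - b γ') ≤ (c : Cardinal) := by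
      intro γ γ'
      have he : b (γ + γ') - b γ - b γ'
          = ((mK k n) ∘ₗ (eK k n)) ∘ₗ (a (γ + γ') - a γ - a γ') := by
        apply LinearMap.ext; intro v
        simp [hb]
      rw [he]
      exact le_trans (LinearMap.rank_comp_le_right _ _) (ha γ γ')
    obtain ⟨χf, -, hχf⟩ := hyp b h1 h2
    refine ⟨⟨AddMonoidHom.mk' (fun g => (eK k n) ∘ₗ (χf ↑g) ∘ₗ (mK k n)) ?_, ?_⟩⟩
    · intro g h
      have h3 : χf ↑(g + h) = χf ↑g + χf ↑h := by
        rw [AddSubgroup.coe_add, map_add]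
      rw [h3]
      apply LinearMap.ext; intro v
      simp
    · intro g
      simp only [AddMonoidHom.mk'_apply]
      have he : (eK k n) ∘ₗ (a ↑g) ∘ₗ (mK k n) - (eK k n) ∘ₗ (χf ↑g) ∘ₗ (mK k n)
          = (eK k n) ∘ₗ (b ↑g - χf ↑g) ∘ₗ (mK k n) := by
        apply LinearMap.ext; intro x
        simp [hb, eK_mK]
      rw [he]
      exact le_trans (rank_conj_le _ _ _) (hχf ↑g)
  -- truncation maps between levels
  have tmem : ∀ (n : ℕ) (ψ : S (n+1)) (g : Γn n),
      LinearMap.rank ((eK k n) ∘ₗ (a ↑g) ∘ₗ (mK k n)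
        - ((eK k n) ∘ₗ (mK k (n+1))) ∘ₗ (ψ.1 (AddSubgroup.inclusion (hmono (Nat.le_succ n)) g))
            ∘ₗ ((eK k (n+1)) ∘ₗ (mK k n))) ≤ (C : Cardinal) := by
    intro n ψ g
    have hcoe : ((AddSubgroup.inclusion (hmono (Nat.le_succ n)) g : Γn (n+1)) : Γ) = ↑g :=
      AddSubgroup.coe_inclusion _ g
    set g' := AddSubgroup.inclusion (hmono (Nat.le_succ n)) g with hg'
    have he : (eK k n) ∘ₗ (a ↑g) ∘ₗ (mK k n)
          - ((eK k n) ∘ₗ (mK k (n+1))) ∘ₗ (ψ.1 g') ∘ₗ ((eK k (n+1)) ∘ₗ (mK k n))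
        = ((eK k n) ∘ₗ (mK k (n+1))) ∘ₗ
            ((eK k (n+1)) ∘ₗ (a ↑g) ∘ₗ (mK k (n+1)) - ψ.1 g')
              ∘ₗ ((eK k (n+1)) ∘ₗ (mK k n)) := by
      apply LinearMap.ext; intro x
      simp [LinearMap.sub_apply, mK_trunc (Nat.le_succ n), eK_trunc (Nat.le_succ n)]
    rw [he]
    refine le_trans (rank_conj_le _ _ _) ?_
    have := ψ.2 g'
    rwa [hcoe] at this
  let t : ∀ n, S (n+1) → S n := fun n ψ =>
    ⟨AddMonoidHom.mk' (fun g => ((eK k n) ∘ₗ (mK k (n+1))) ∘ₗ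
        (ψ.1 (AddSubgroup.inclusion (hmono (Nat.le_succ n)) g)) ∘ₗ ((eK k (n+1)) ∘ₗ (mK k n)))
      (by
        intro g h
        rw [map_add, map_add]
        apply LinearMap.ext; intro x
        simp),
      fun g => tmem n ψ g⟩
  obtain ⟨φs, hφs⟩ := konig t
  have hcompat : ∀ (n : ℕ) (g : Γn n), (φs n).1 g
      = ((eK k n) ∘ₗ (mK k (n+1))) ∘ₗ
          ((φs (n+1)).1 (AddSubgroup.inclusion (hmono (Nat.le_succ n)) g))
            ∘ₗ ((eK k (n+1)) ∘ₗ (mK k n)) := by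
    intro n g
    conv_lhs => rw [← hφs n]
    rfl
  -- stabilization of coordinates
  have stab : ∀ (n : ℕ) (γ : Γ) (hγ : γ ∈ Γn n) (v : ℕ →₀ k) (hv : ∀ i, n ≤ i → v i = 0)
      (j : ℕ) (hj : j < n) (m : ℕ) (hnm : n ≤ m),
      (mK k m (((φs m).1 ⟨γ, hmono hnm hγ⟩) (eK k m v))) j
        = (mK k n (((φs n).1 ⟨γ, hγ⟩) (eK k n v))) j := by
    intro n γ hγ v hv j hj m hnm
    induction m, hnm using Nat.le_induction with
    | base => rfl
    | succ m hm ih =>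
      rw [← ih]
      have h1 : (⟨γ, hmono (le_trans hm (Nat.le_succ m)) hγ⟩ : Γn (m+1))
          = AddSubgroup.inclusion (hmono (Nat.le_succ m)) ⟨γ, hmono hm hγ⟩ := by
        apply Subtype.ext
        simp [AddSubgroup.coe_inclusion]
      have h2 : mK k m (eK k m v) = v := mK_eK m v (fun i hi => hv i (le_trans hm hi))
      rw [hcompat m ⟨γ, hmono hm hγ⟩]
      simp only [LinearMap.comp_apply]
      rw [h2, mK_eK_coord m _ j (lt_of_lt_of_le hj hm)]
      rw [h1]
  -- the limit
  set sb : (ℕ →₀ k) → ℕ := fun v => v.support.sup id + 1 with hsb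
  set nn : Γ → (ℕ →₀ k) → ℕ → ℕ := fun γ v j => max (n₀ γ) (max (j+1) (sb v)) with hnn
  have hnnγ : ∀ γ v j, γ ∈ Γn (nn γ v j) := fun γ v j => hmono (le_max_left _ _) (hn₀ γ)
  have h_j_nn : ∀ γ v j, j + 1 ≤ nn γ v j :=
    fun γ v j => le_trans (le_max_left _ _) (le_max_right _ _)
  have h_sb_nn : ∀ γ v j, sb v ≤ nn γ v j :=
    fun γ v j => le_trans (le_max_right _ _) (le_max_right _ _)
  set Lm : Γ → (ℕ →₀ k) → ℕ → k := fun γ v j =>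
    mK k (nn γ v j) (((φs (nn γ v j)).1 ⟨γ, hnnγ γ v j⟩) (eK k (nn γ v j) v)) j with hLm
  have limit_eq : ∀ (γ : Γ) (n : ℕ) (hγ : γ ∈ Γn n) (v : ℕ →₀ k) (hv : ∀ i, n ≤ i → v i = 0)
      (j : ℕ) (hj : j < n), Lm γ v j = (mK k n (((φs n).1 ⟨γ, hγ⟩) (eK k n v))) j := by
    intro γ n hγ v hv j hj
    have e1 := stab n γ hγ v hv j hj (max n (nn γ v j)) (le_max_left _ _)
    have e2 := stab (nn γ v j) γ (hnnγ γ v j) v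
      (fun i hi => support_bound v i (le_trans (h_sb_nn γ v j) hi))
      j (lt_of_lt_of_le (Nat.lt_succ_self j) (h_j_nn γ v j))
      (max n (nn γ v j)) (le_max_right _ _)
    exact e2.symm.trans e1
  -- limit values are linear / additive
  have key_add : ∀ (γ : Γ) (v w : ℕ →₀ k) (j : ℕ), Lm γ (v + w) j = Lm γ v j + Lm γ w j := by
    intro γ v w j
    set N := max (nn γ v j) (max (nn γ w j) (nn γ (v + w) j)) with hN
    have hγN : γ ∈ Γn N := hmono (le_trans (le_max_left _ _) (le_max_left _ _) :
      n₀ γ ≤ N) (hn₀ γ)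
    have hjN : j < N := lt_of_lt_of_le (Nat.lt_succ_self j)
      (le_trans (h_j_nn γ v j) (le_max_left _ _))
    have hv : ∀ i, N ≤ i → v i = 0 := fun i hi =>
      support_bound v i (le_trans (le_trans (h_sb_nn γ v j) (le_max_left _ _)) hi)
    have hw : ∀ i, N ≤ i → w i = 0 := fun i hi =>
      support_bound w i (le_trans (le_trans (h_sb_nn γ w j)
        (le_trans (le_max_left _ _) (le_max_right _ _))) hi)
    have hvw : ∀ i, N ≤ i → (v + w) i = 0 := fun i hi =>
      support_bound (v + w) i (le_trans (le_trans (h_sb_nn γ (v + w) j)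
        (le_trans (le_max_right _ _) (le_max_right _ _))) hi)
    rw [limit_eq γ N hγN (v + w) hvw j hjN, limit_eq γ N hγN v hv j hjN,
      limit_eq γ N hγN w hw j hjN]
    simp [map_add]
  have key_smul : ∀ (γ : Γ) (s : k) (v : ℕ →₀ k) (j : ℕ), Lm γ (s • v) j = s * Lm γ v j := by
    intro γ s v j
    set N := max (nn γ v j) (nn γ (s • v) j) with hN
    have hγN : γ ∈ Γn N := hmono (le_trans (le_max_left _ _) (le_max_left _ _) :
      n₀ γ ≤ N) (hn₀ γ)
    have hjN : j < N := lt_of_lt_of_le (Nat.lt_succ_self j)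
      (le_trans (h_j_nn γ v j) (le_max_left _ _))
    have hv : ∀ i, N ≤ i → v i = 0 := fun i hi =>
      support_bound v i (le_trans (le_trans (h_sb_nn γ v j) (le_max_left _ _)) hi)
    have hsv : ∀ i, N ≤ i → (s • v) i = 0 := fun i hi =>
      support_bound (s • v) i (le_trans (le_trans (h_sb_nn γ (s • v) j) (le_max_right _ _)) hi)
    rw [limit_eq γ N hγN (s • v) hsv j hjN, limit_eq γ N hγN v hv j hjN]
    simp [map_smul]
  have key_gadd : ∀ (γ γ' : Γ) (v : ℕ →₀ k) (j : ℕ),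
      Lm (γ + γ') v j = Lm γ v j + Lm γ' v j := by
    intro γ γ' v j
    set N := max (nn γ v j) (max (nn γ' v j) (nn (γ + γ') v j)) with hN
    have hγN : γ ∈ Γn N := hmono (le_trans (le_max_left _ _) (le_max_left _ _) :
      n₀ γ ≤ N) (hn₀ γ)
    have hγ'N : γ' ∈ Γn N := hmono (le_trans (le_max_left _ _)
      (le_trans (le_max_left _ _) (le_max_right _ _)) : n₀ γ' ≤ N) (hn₀ γ')
    have hγγ'N : γ + γ' ∈ Γn N := add_mem hγN hγ'N
    have hjN : j < N := lt_of_lt_of_le (Nat.lt_succ_self j)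
      (le_trans (h_j_nn γ v j) (le_max_left _ _))
    have hv : ∀ i, N ≤ i → v i = 0 := fun i hi =>
      support_bound v i (le_trans (le_trans (h_sb_nn γ v j) (le_max_left _ _)) hi)
    rw [limit_eq (γ + γ') N hγγ'N v hv j hjN, limit_eq γ N hγN v hv j hjN,
      limit_eq γ' N hγ'N v hv j hjN]
    have hsum : (⟨γ + γ', hγγ'N⟩ : Γn N) = ⟨γ, hγN⟩ + ⟨γ', hγ'N⟩ := by
      apply Subtype.ext; rfl
    rw [hsum, map_add]
    simp
  let L : Γ → ((ℕ →₀ k) →ₗ[k] (ℕ → k)) := fun γ =>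
    { toFun := fun v j => Lm γ v j
      map_add' := fun v w => funext fun j => key_add γ v w j
      map_smul' := fun s v => funext fun j => key_smul γ s v j }
  have hLadd : ∀ γ γ', L (γ + γ') = L γ + L γ' := fun γ γ' =>
    LinearMap.ext fun v => funext fun j => key_gadd γ γ' v j
  -- rank bound on the defect of the limit
  have hrank : ∀ γ : Γ,
      LinearMap.rank ((Finsupp.lcoeFun : (ℕ →₀ k) →ₗ[k] (ℕ → k)) ∘ₗ (a γ) - L γ)
        ≤ (C : Cardinal) := by
    intro γ
    set d : (ℕ →₀ k) →ₗ[k] (ℕ → k) := (Finsupp.lcoeFun : (ℕ →₀ k) →ₗ[k] (ℕ → k)) ∘ₗ (a γ) - L γ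
      with hd
    by_contra hcon
    have hC1 : ((C + 1 : ℕ) : Cardinal) ≤ LinearMap.rank d :=
      (Cardinal.nat_succ C) ▸ Order.succ_le_of_lt (not_le.1 hcon)
    rw [LinearMap.rank] at hC1
    obtain ⟨f, hf⟩ := natCast_le_rank_iff.1 hC1
    have hfi : LinearIndependent k (fun i => ((f i : ℕ → k))) :=
      hf.map' (LinearMap.range d).subtype (Submodule.ker_subtype _)
    choose u hu using fun i => LinearMap.mem_range.1 (f i).2
    set n₁ : ℕ := max (n₀ γ) ((Finset.univ.sup fun i : Fin (C+1) => sb (u i))) with hn₁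
    have hγn : ∀ n, n₁ ≤ n → γ ∈ Γn n := fun n hn =>
      hmono (le_trans (le_max_left _ _) hn) (hn₀ γ)
    have hun : ∀ (i : Fin (C+1)) (n : ℕ), n₁ ≤ n → ∀ i', n ≤ i' → (u i) i' = 0 := by
      intro i n hn i' hi'
      apply support_bound
      have h1 : sb (u i) ≤ Finset.univ.sup fun i : Fin (C+1) => sb (u i) :=
        Finset.le_sup (f := fun i : Fin (C+1) => sb (u i)) (Finset.mem_univ i)
      exact le_trans (le_trans (le_trans h1 (le_max_right _ _)) hn) hi'
    have hdep : ∀ (n : ℕ) (hn : n₁ ≤ n), ∃ g : Fin (C+1) → k,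
        (∑ i, g i • (((eK k n) ∘ₗ (a γ) ∘ₗ (mK k n) - (φs n).1 ⟨γ, hγn n hn⟩)
          (eK k n (u i)))) = 0 ∧ ∃ i, g i ≠ 0 := by
      intro n hn
      refine Fintype.not_linearIndependent_iff.1 ?_
      intro hli
      set D := (eK k n) ∘ₗ (a γ) ∘ₗ (mK k n) - (φs n).1 ⟨γ, hγn n hn⟩ with hD
      have hli2 : LinearIndependent k (fun i : Fin (C+1) =>
          (⟨D (eK k n (u i)), LinearMap.mem_range_self _ _⟩ : LinearMap.range D)) :=
        hli.of_comp (LinearMap.range D).subtype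
      have hcard := hli2.cardinal_lift_le_rank
      have hle : ((C + 1 : ℕ) : Cardinal) ≤ LinearMap.rank D := by
        rw [LinearMap.rank]
        simpa using hcard
      have hfin := le_trans hle ((φs n).2 ⟨γ, hγn n hn⟩)
      rw [Nat.cast_le] at hfin
      omega
    choose gsel hsum hnz using fun n : ℕ => hdep (max n₁ n) (le_max_left _ _)
    obtain ⟨g₀, hg₀⟩ := Finite.exists_infinite_fiber gsel
    have hinf : (gsel ⁻¹' {g₀}).Infinite := Set.infinite_coe_iff.1 hg₀
    have hzero : ∑ i, g₀ i • (d (u i)) = 0 := by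
      funext j
      obtain ⟨n, hnfib, hjn⟩ := hinf.exists_gt j
      set N := max n₁ n with hN
      have hγN : γ ∈ Γn N := hγn N (le_max_left _ _)
      have hjN : j < N := lt_of_lt_of_le hjn (le_max_right _ _)
      have hcoord : ∀ i, d (u i) j
          = (((eK k N) ∘ₗ (a γ) ∘ₗ (mK k N) - (φs N).1 ⟨γ, hγN⟩) (eK k N (u i))) ⟨j, hjN⟩ := by
        intro i
        have h0 : d (u i) j = (a γ (u i)) j - Lm γ (u i) j := rfl
        rw [h0, limit_eq γ N hγN (u i) (hun i N (le_max_left _ _)) j hjN]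
        rw [LinearMap.sub_apply, Pi.sub_apply, LinearMap.comp_apply, LinearMap.comp_apply,
          mK_eK N (u i) (hun i N (le_max_left _ _)), eK_apply,
          mK_coord N _ j hjN]
      have hgsel : gsel n = g₀ := hnfib
      have hs := hsum n
      rw [hgsel] at hs
      calc (∑ i, g₀ i • (d (u i))) j = ∑ i, g₀ i • (d (u i) j) := by
            simp [Finset.sum_apply]
        _ = ∑ i, g₀ i • ((((eK k N) ∘ₗ (a γ) ∘ₗ (mK k N) - (φs N).1 ⟨γ, hγN⟩)
              (eK k N (u i))) ⟨j, hjN⟩) := by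
            simp_rw [hcoord]
        _ = (∑ i, g₀ i • (((eK k N) ∘ₗ (a γ) ∘ₗ (mK k N) - (φs N).1 ⟨γ, hγN⟩)
              (eK k N (u i)))) ⟨j, hjN⟩ := by
            simp [Finset.sum_apply]
        _ = 0 := by rw [hs]; rfl
    have hsum0 : ∑ i, g₀ i • ((f i : ℕ → k)) = 0 := by
      have heq : ∀ i, ((f i : ℕ → k)) = d (u i) := fun i => (hu i).symm
      simp_rw [heq]
      exact hzero
    have hall := Fintype.linearIndependent_iff.1 hfi g₀ hsum0
    obtain ⟨n', hn'⟩ := hinf.nonempty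
    obtain ⟨i0, hi0⟩ := hnz n'
    rw [show gsel n' = g₀ from hn'] at hi0
    exact hi0 (hall i0)
  -- assemble the homomorphism
  refine ⟨AddMonoidHom.mk' (fun γ => T ∘ₗ L γ) ?_, ?_⟩
  · intro γ γ'
    rw [hLadd γ γ']
    apply LinearMap.ext; intro v
    simp
  · intro γ
    show LinearMap.rank (a γ - T ∘ₗ L γ) ≤ (C : Cardinal)
    have he : a γ - T ∘ₗ L γ
        = T ∘ₗ ((Finsupp.lcoeFun : (ℕ →₀ k) →ₗ[k] (ℕ → k)) ∘ₗ (a γ) - L γ) := by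
      apply LinearMap.ext; intro v
      simp; exact (hTι _).symm
    rw [he]
    exact le_trans (LinearMap.rank_comp_le_right _ _) (hrank γ)
end
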